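/- Under the assumptions that X1, X2, Y are conditionally independent given h ∈ ℋ (ℋ finite) and that [P(X1, X2)] has rank |ℋ|, if f1 is a tv-embedding of 𝒳1 w.r.t. 𝒳2 and f2 is a tv-embedding of 𝒳2 w.r.t. 𝒳1, then there exists a function q such that P(Y=y | X1=x1, X2=x2) = q(f1(x1), f2(x2), y) for all x1, x2, y. -/

import Mathlib

open Finset

/-- Under conditional independence of X1, X2, Y given h and the rank
condition on `[P(x1,x2)]`, if `f1` is a tv-embedding of 𝒳1 w.r.t. 𝒳2 and `f2` is a
tv-embedding of 𝒳2 w.r.t. 𝒳1, then there is `q` with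
`P(y|x1,x2) = q (f1 x1) (f2 x2) y`. -/
lemma rank_inj {n m : Type*} [Fintype n] [Fintype m]
    (B : Matrix m n ℝ) (h : B.rank = Fintype.card n) :
    Function.Injective B.mulVecLin := by
  rw [← LinearMap.ker_eq_bot]
  have h1 := LinearMap.finrank_range_add_finrank_ker B.mulVecLin
  rw [Module.finrank_pi ℝ] at h1
  have h2 : Module.finrank ℝ (LinearMap.ker B.mulVecLin) = 0 := by
    have : B.rank = Module.finrank ℝ (LinearMap.range B.mulVecLin) := rfl
    omega
  exact Submodule.finrank_eq_zero.mp h2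


theorem stmt4 {X1 X2 Y H A1 A2 : Type*}
    [Fintype X1] [Fintype X2] [Fintype Y] [Fintype H]
    (p : X1 → X2 → Y → H → ℝ)
    (hnn : ∀ x1 x2 y h, 0 ≤ p x1 x2 y h)
    (hsum : ∑ x1, ∑ x2, ∑ y, ∑ h, p x1 x2 y h = 1)
    (hpos_X1 : ∀ x1, 0 < ∑ x2, ∑ y, ∑ h, p x1 x2 y h)
    (hpos_X2 : ∀ x2, 0 < ∑ x1, ∑ y, ∑ h, p x1 x2 y h)
    (hpos_X1X2 : ∀ x1 x2, 0 < ∑ y, ∑ h, p x1 x2 y h)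
    (hpos_H : ∀ h, 0 < ∑ x1, ∑ x2, ∑ y, p x1 x2 y h)
    (hci : ∀ x1 x2 y h,
      p x1 x2 y h / (∑ x1', ∑ x2', ∑ y', p x1' x2' y' h)
        = ((∑ x2', ∑ y', p x1 x2' y' h) / (∑ x1', ∑ x2', ∑ y', p x1' x2' y' h))
          * ((∑ x1', ∑ y', p x1' x2 y' h) / (∑ x1', ∑ x2', ∑ y', p x1' x2' y' h))
          * ((∑ x1', ∑ x2', p x1' x2' y h) / (∑ x1', ∑ x2', ∑ y', p x1' x2' y' h)))
    (hrank : (Matrix.of fun (x1 : X1) (x2 : X2) =>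
        ∑ y, ∑ h, p x1 x2 y h).rank = Fintype.card H)
    (f1 : X1 → A1) (g1 : A1 → X2 → ℝ)
    (hf1 : ∀ x1 x2,
      (∑ y, ∑ h, p x1 x2 y h) / (∑ x2', ∑ y, ∑ h, p x1 x2' y h)
        = g1 (f1 x1) x2)
    (f2 : X2 → A2) (g2 : A2 → X1 → ℝ)
    (hf2 : ∀ x1 x2,
      (∑ y, ∑ h, p x1 x2 y h) / (∑ x1', ∑ y, ∑ h, p x1' x2 y h)
        = g2 (f2 x2) x1) :
    ∃ q : A1 → A2 → Y → ℝ, ∀ x1 x2 y,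
      (∑ h, p x1 x2 y h) / (∑ y', ∑ h, p x1 x2 y' h)
        = q (f1 x1) (f2 x2) y := by
  classical
  set π : H → ℝ := fun h => ∑ x1, ∑ x2, ∑ y, p x1 x2 y h with hπdef
  have hπpos : ∀ h, 0 < π h := hpos_H
  set A : Matrix X1 H ℝ := Matrix.of fun x1 h => (∑ x2, ∑ y, p x1 x2 y h) / π h with hAdef
  set B : Matrix X2 H ℝ := Matrix.of fun x2 h => ∑ x1, ∑ y, p x1 x2 y h with hBdef
  set C : Y → H → ℝ := fun y h => (∑ x1, ∑ x2, p x1 x2 y h) / π h with hCdef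
  -- factorization
  have hp : ∀ x1 x2 y h, p x1 x2 y h = A x1 h * B x2 h * C y h := by
    intro a b y h
    have h0 : (∑ x1, ∑ x2, ∑ y, p x1 x2 y h) ≠ 0 := (hpos_H h).ne'
    have h1 := hci a b y h
    rw [div_eq_iff h0] at h1
    show p a b y h = ((∑ x2, ∑ y, p a x2 y h) / (∑ x1, ∑ x2, ∑ y, p x1 x2 y h))
        * (∑ x1, ∑ y, p x1 b y h)
        * ((∑ x1, ∑ x2, p x1 x2 y h) / (∑ x1, ∑ x2, ∑ y, p x1 x2 y h))
    rw [h1]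
    field_simp
  -- sum over y of C is 1
  have hC1 : ∀ h, ∑ y, C y h = 1 := by
    intro h
    have h0 : π h ≠ 0 := (hπpos h).ne'
    have : ∑ y, ∑ x1, ∑ x2, p x1 x2 y h = π h := by
      show _ = ∑ x1, ∑ x2, ∑ y, p x1 x2 y h
      rw [Finset.sum_comm]
      exact Finset.sum_congr rfl fun x1 _ => Finset.sum_comm
    simp only [hCdef]
    rw [← Finset.sum_div, this, div_self h0]
  -- the joint matrix factorizes
  have hM : ∀ x1 x2, ∑ y, ∑ h, p x1 x2 y h = ∑ h, A x1 h * B x2 h := by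
    intro x1 x2
    rw [Finset.sum_comm]
    refine Finset.sum_congr rfl fun h _ => ?_
    simp only [hp]
    rw [← Finset.mul_sum, hC1, mul_one]
  -- rank facts
  have hMfact : (Matrix.of fun (x1 : X1) (x2 : X2) => ∑ y, ∑ h, p x1 x2 y h)
      = A * B.transpose := by
    ext x1 x2
    simp only [Matrix.of_apply, Matrix.mul_apply, Matrix.transpose_apply]
    exact hM x1 x2
  have hBrank : B.rank = Fintype.card H := by
    refine le_antisymm (Matrix.rank_le_card_width B) ?_
    calc Fintype.card H = (A * B.transpose).rank := by rw [← hMfact, hrank]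
      _ ≤ B.transpose.rank := Matrix.rank_mul_le_right A B.transpose
      _ = B.rank := Matrix.rank_transpose B
  have hArank : A.rank = Fintype.card H := by
    refine le_antisymm (Matrix.rank_le_card_width A) ?_
    calc Fintype.card H = (A * B.transpose).rank := by rw [← hMfact, hrank]
      _ = (A * B.transpose).transpose.rank := (Matrix.rank_transpose _).symm
      _ = (B * A.transpose).rank := by rw [Matrix.transpose_mul, Matrix.transpose_transpose]
      _ ≤ A.transpose.rank := Matrix.rank_mul_le_right B A.transpose
      _ = A.rank := Matrix.rank_transpose A
  have hBinj := rank_inj B hBrank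
  have hAinj := rank_inj A hArank
  -- proportionality of A rows
  have key1 : ∀ x1 x1', f1 x1 = f1 x1' →
      ∃ l : ℝ, 0 < l ∧ ∀ h, A x1' h = l * A x1 h := by
    intro x1 x1' hf
    have hrs : 0 < ∑ x2, ∑ y, ∑ h, p x1 x2 y h := hpos_X1 x1
    have hrs' : 0 < ∑ x2, ∑ y, ∑ h, p x1' x2 y h := hpos_X1 x1'
    refine ⟨(∑ x2, ∑ y, ∑ h, p x1' x2 y h) / (∑ x2, ∑ y, ∑ h, p x1 x2 y h),
      div_pos hrs' hrs, ?_⟩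
    have hMrow : ∀ x2, (∑ y, ∑ h, p x1' x2 y h)
        = ((∑ x2', ∑ y, ∑ h, p x1' x2' y h) / (∑ x2', ∑ y, ∑ h, p x1 x2' y h))
          * (∑ y, ∑ h, p x1 x2 y h) := by
      intro x2
      have e1 := hf1 x1 x2
      have e2 := hf1 x1' x2
      rw [hf] at e1
      rw [← e2] at e1
      field_simp at e1 ⊢
      linarith [e1]
    have := hBinj (a₁ := fun h => A x1' h)
      (a₂ := fun h => ((∑ x2', ∑ y, ∑ h, p x1' x2' y h) / (∑ x2', ∑ y, ∑ h, p x1 x2' y h))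
        * A x1 h) ?_
    · intro h; exact congrFun this h
    · ext x2
      simp only [Matrix.mulVecLin_apply, Matrix.mulVec, dotProduct]
      have l1 : ∑ h, B x2 h * A x1' h = ∑ y, ∑ h, p x1' x2 y h := by
        rw [hM]; exact Finset.sum_congr rfl fun h _ => mul_comm _ _
      have l2 : ∑ h, B x2 h * (((∑ x2', ∑ y, ∑ h, p x1' x2' y h) / (∑ x2', ∑ y, ∑ h, p x1 x2' y h)) * A x1 h)
          = ((∑ x2', ∑ y, ∑ h, p x1' x2' y h) / (∑ x2', ∑ y, ∑ h, p x1 x2' y h)) * ∑ y, ∑ h, p x1 x2 y h := by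
        rw [hM, Finset.mul_sum]
        exact Finset.sum_congr rfl fun h _ => by ring
      rw [l1, l2, hMrow x2]
  -- proportionality of B rows
  have key2 : ∀ x2 x2', f2 x2 = f2 x2' →
      ∃ l : ℝ, 0 < l ∧ ∀ h, B x2' h = l * B x2 h := by
    intro x2 x2' hf
    have hrs : 0 < ∑ x1, ∑ y, ∑ h, p x1 x2 y h := hpos_X2 x2
    have hrs' : 0 < ∑ x1, ∑ y, ∑ h, p x1 x2' y h := hpos_X2 x2'
    refine ⟨(∑ x1, ∑ y, ∑ h, p x1 x2' y h) / (∑ x1, ∑ y, ∑ h, p x1 x2 y h),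
      div_pos hrs' hrs, ?_⟩
    have hMrow : ∀ x1, (∑ y, ∑ h, p x1 x2' y h)
        = ((∑ x1', ∑ y, ∑ h, p x1' x2' y h) / (∑ x1', ∑ y, ∑ h, p x1' x2 y h))
          * (∑ y, ∑ h, p x1 x2 y h) := by
      intro x1
      have e1 := hf2 x1 x2
      have e2 := hf2 x1 x2'
      rw [hf] at e1
      rw [← e2] at e1
      field_simp at e1 ⊢
      linarith [e1]
    have := hAinj (a₁ := fun h => B x2' h)
      (a₂ := fun h => ((∑ x1', ∑ y, ∑ h, p x1' x2' y h) / (∑ x1', ∑ y, ∑ h, p x1' x2 y h))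
        * B x2 h) ?_
    · intro h; exact congrFun this h
    · ext x1
      simp only [Matrix.mulVecLin_apply, Matrix.mulVec, dotProduct]
      have l1 : ∑ h, A x1 h * B x2' h = ∑ y, ∑ h, p x1 x2' y h := by
        rw [hM]
      have l2 : ∑ h, A x1 h * (((∑ x1', ∑ y, ∑ h, p x1' x2' y h) / (∑ x1', ∑ y, ∑ h, p x1' x2 y h)) * B x2 h)
          = ((∑ x1', ∑ y, ∑ h, p x1' x2' y h) / (∑ x1', ∑ y, ∑ h, p x1' x2 y h)) * ∑ y, ∑ h, p x1 x2 y h := by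
        rw [hM, Finset.mul_sum]
        exact Finset.sum_congr rfl fun h _ => by ring
      rw [l1, l2, hMrow x1]
  -- invariance of conditional
  have keyr : ∀ x1 x1' x2 x2' y, f1 x1 = f1 x1' → f2 x2 = f2 x2' →
      (∑ h, p x1 x2 y h) / (∑ y', ∑ h, p x1 x2 y' h)
        = (∑ h, p x1' x2' y h) / (∑ y', ∑ h, p x1' x2' y' h) := by
    intro x1 x1' x2 x2' y ha hb
    obtain ⟨l, hl, hA'⟩ := key1 x1 x1' ha
    obtain ⟨m, hm, hB'⟩ := key2 x2 x2' hb
    have hnum : ∑ h, p x1' x2' y h = (l * m) * ∑ h, p x1 x2 y h := by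
      rw [Finset.mul_sum]
      refine Finset.sum_congr rfl fun h _ => ?_
      rw [hp, hp, hA', hB']; ring
    have hden : ∑ y', ∑ h, p x1' x2' y' h = (l * m) * ∑ y', ∑ h, p x1 x2 y' h := by
      rw [Finset.mul_sum]
      refine Finset.sum_congr rfl fun y' _ => ?_
      rw [Finset.mul_sum]
      refine Finset.sum_congr rfl fun h _ => ?_
      rw [hp, hp, hA', hB']; ring
    rw [hnum, hden, mul_div_mul_left _ _ (by positivity)]
  -- construct q
  refine ⟨fun a1 a2 y =>
    if hc : (∃ x1, f1 x1 = a1) ∧ (∃ x2, f2 x2 = a2) then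
      (∑ h, p hc.1.choose hc.2.choose y h) / (∑ y', ∑ h, p hc.1.choose hc.2.choose y' h)
    else 0, ?_⟩
  intro x1 x2 y
  have hc : (∃ x1', f1 x1' = f1 x1) ∧ (∃ x2', f2 x2' = f2 x2) := ⟨⟨x1, rfl⟩, ⟨x2, rfl⟩⟩
  simp only []
  rw [dif_pos hc]
  exact keyr x1 hc.1.choose x2 hc.2.choose y hc.1.choose_spec.symm hc.2.choose_spec.symm
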